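/- Let P be an r-differential poset. Then every element x ∈ P_1 is covered by at least two thread elements of P_2. -/

import Mathlib

open Classical in
/-- The up operator `U_n : ℚP_n → ℚP_{n+1}` of a graded poset with rank function `rank`,
sending each basis element `x ∈ P_n` to the sum of the elements covering it. -/
noncomputable def upMap {P : Type*} [PartialOrder P] (rank : P → ℕ)
    [∀ m : ℕ, Fintype {x : P // rank x = m}] (n : ℕ) :
    ({x : P // rank x = n} → ℚ) →ₗ[ℚ] ({x : P // rank x = n + 1} → ℚ) :=
  Matrix.mulVecLin (fun (y : {x : P // rank x = n + 1}) (x : {x : P // rank x = n}) =>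
    if (x : P) ⋖ (y : P) then 1 else 0)

open Classical in
/-- The down operator `D_n : ℚP_n → ℚP_{n-1}` of a graded poset with rank function `rank`,
sending each basis element `x ∈ P_n` to the sum of the elements it covers.
(For `n = 0` this is the zero map on `ℚP_0` in a graded poset, matching `D_0 = 0`.) -/
noncomputable def downMap {P : Type*} [PartialOrder P] (rank : P → ℕ)
    [∀ m : ℕ, Fintype {x : P // rank x = m}] (n : ℕ) :
    ({x : P // rank x = n} → ℚ) →ₗ[ℚ] ({x : P // rank x = n - 1} → ℚ) :=
  Matrix.mulVecLin (fun (z : {x : P // rank x = n - 1}) (x : {x : P // rank x = n}) =>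
    if (z : P) ⋖ (x : P) then 1 else 0)

/-- `P` (a partial order with rank function `rank`, all rank sets finite) is an
`r`-differential poset: `r > 0`, there is a least element `0̂` of rank `0`, the poset is
graded (covers raise rank by exactly one, the rank function is strictly monotone, and every
element of nonzero rank covers something), and `D_{n+1} U_n - U_{n-1} D_n = r·I` on `ℚP_n`
for all `n ≥ 0` (for `n = 0` the relation reads `D_1 U_0 = r·I`, since `D_0 = 0`). -/
structure IsDifferentialPoset {P : Type*} [PartialOrder P] (rank : P → ℕ)
    [∀ m : ℕ, Fintype {x : P // rank x = m}] (r : ℕ) : Prop where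
  r_pos : 0 < r
  exists_bot : ∃ b : P, rank b = 0 ∧ ∀ x : P, b ≤ x
  rank_covBy : ∀ x y : P, x ⋖ y → rank y = rank x + 1
  rank_strictMono : ∀ x y : P, x < y → rank x < rank y
  exists_covBy_of_rank_ne_zero : ∀ x : P, rank x ≠ 0 → ∃ y : P, y ⋖ x
  diff_zero : downMap rank 1 ∘ₗ upMap rank 0 = (r : ℚ) • LinearMap.id
  diff : ∀ n : ℕ,
    LinearMap.comp (M₃ := {x : P // rank x = n + 1} → ℚ)
        (downMap rank (n + 2)) (upMap rank (n + 1))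
      - upMap rank n ∘ₗ downMap rank (n + 1) = (r : ℚ) • LinearMap.id

/-- An element of a graded poset is a *singleton* if it has rank `0` (i.e. it is `0̂`)
or it covers exactly one element. -/
def IsSingletonElem {P : Type*} [PartialOrder P] (rank : P → ℕ) (x : P) : Prop :=
  rank x = 0 ∨ ∃! z : P, z ⋖ x

/-- A *thread element* is a singleton which covers another singleton. -/
def IsThreadElem {P : Type*} [PartialOrder P] (rank : P → ℕ) (x : P) : Prop :=
  IsSingletonElem rank x ∧ ∃ z : P, z ⋖ x ∧ IsSingletonElem rank z

section AuxForTwoThreads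

open Classical

variable {P : Type*} [PartialOrder P] (rank : P → ℕ)
  [∀ m : ℕ, Fintype {x : P // rank x = m}]

lemma upMap_apply' (n : ℕ) (v : {x : P // rank x = n} → ℚ) (y : {x : P // rank x = n + 1}) :
    upMap rank n v y = ∑ x : {x : P // rank x = n}, (if (x : P) ⋖ (y : P) then (1:ℚ) else 0) * v x := rfl

lemma downMap_apply' (n : ℕ) (v : {x : P // rank x = n} → ℚ) (z : {x : P // rank x = n - 1}) :
    downMap rank n v z = ∑ x : {x : P // rank x = n}, (if (z : P) ⋖ (x : P) then (1:ℚ) else 0) * v x := rfl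

lemma upMap_single (n : ℕ) (x : {v : P // rank v = n}) (y : {v : P // rank v = n + 1}) :
    upMap rank n (Pi.single x 1) y = if (x : P) ⋖ (y : P) then 1 else 0 := by
  simp [upMap_apply', Matrix.mulVecLin_apply, Matrix.mulVec_single, Pi.single_apply]

lemma DU_single (n : ℕ) (x x' : {v : P // rank v = n}) :
    downMap rank (n + 1) (upMap rank n (Pi.single x 1)) x' =
      ((Finset.univ.filter
        (fun y : {v : P // rank v = n + 1} => (x : P) ⋖ (y : P) ∧ (x' : P) ⋖ (y : P))).card : ℚ) := by
  have : downMap rank (n + 1) (upMap rank n (Pi.single x 1)) x'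
      = ∑ y : {v : P // rank v = n + 1},
          (if (x' : P) ⋖ (y : P) then (1:ℚ) else 0) * (if (x : P) ⋖ (y : P) then 1 else 0) := by
    simp [downMap_apply', Matrix.mulVecLin_apply, Matrix.mulVec, dotProduct, Matrix.mulVec_single, upMap_single, mul_comm]
  rw [this, Finset.card_filter]
  push_cast
  apply Finset.sum_congr rfl
  intro y _
  by_cases h1 : (x : P) ⋖ (y : P) <;> by_cases h2 : (x' : P) ⋖ (y : P) <;> simp [h1, h2]

lemma UD_single (n : ℕ) (x x' : {v : P // rank v = n + 1}) :
    upMap rank n (downMap rank (n + 1) (Pi.single x 1)) x' =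
      ((Finset.univ.filter
        (fun z : {v : P // rank v = n} => (z : P) ⋖ (x : P) ∧ (z : P) ⋖ (x' : P))).card : ℚ) := by
  have : upMap rank n (downMap rank (n + 1) (Pi.single x 1)) x'
      = ∑ z : {v : P // rank v = n},
          (if (z : P) ⋖ (x' : P) then (1:ℚ) else 0) * (if (z : P) ⋖ (x : P) then 1 else 0) := by
    simp [downMap_apply', upMap_apply', Matrix.mulVecLin_apply, Matrix.mulVec, dotProduct, Matrix.mulVec_single, mul_comm, Pi.single_apply]
  rw [this, Finset.card_filter]
  push_cast
  apply Finset.sum_congr rfl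
  intro z _
  by_cases h1 : (z : P) ⋖ (x : P) <;> by_cases h2 : (z : P) ⋖ (x' : P) <;> simp [h1, h2]

end AuxForTwoThreads

/-- Gaetz–Venkataramana, Proposition 3.5. In an `r`-differential poset,
every element of rank `1` is covered by at least two thread elements of rank `2`. -/
theorem two_threads_cover_rank_one {P : Type*} [PartialOrder P] (rank : P → ℕ)
    [∀ m : ℕ, Fintype {x : P // rank x = m}] (r : ℕ)
    (hP : IsDifferentialPoset rank r) (x : P) (hx : rank x = 1) :
    2 ≤ Set.ncard {y : P | rank y = 2 ∧ x ⋖ y ∧ IsThreadElem rank y} := by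
  classical
  obtain ⟨b, hb0, hble⟩ := hP.exists_bot
  -- unique rank-0 element
  have hb_uniq : ∀ z : P, rank z = 0 → z = b := by
    intro z hz
    by_contra hne
    have : b < z := lt_of_le_of_ne (hble z) (Ne.symm hne)
    have := hP.rank_strictMono b z this
    omega
  -- b is covered by every rank-1 element
  have hbcov : ∀ y : P, rank y = 1 → b ⋖ y := by
    intro y hy
    constructor
    · exact lt_of_le_of_ne (hble y) (by rintro rfl; omega)
    · intro c hbc hcy
      have h1 := hP.rank_strictMono b c hbc
      have h2 := hP.rank_strictMono c y hcy
      omega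
  haveI : Unique {v : P // rank v = 0} :=
    ⟨⟨⟨b, hb0⟩⟩, fun z => Subtype.ext (hb_uniq z z.2)⟩
  -- x is a singleton element
  have hx_singleton : IsSingletonElem rank x := by
    refine Or.inr ⟨b, hbcov x hx, fun z hz => ?_⟩
    have := hP.rank_covBy z x hz
    exact hb_uniq z (by omega)
  -- card of P_1 is r
  have hcard1 : Fintype.card {v : P // rank v = 1} = r := by
    have h := congrFun (LinearMap.congr_fun hP.diff_zero
      (Pi.single (⟨b, hb0⟩ : {v : P // rank v = 0}) 1)) ⟨b, hb0⟩
    have hL : downMap rank 1 (upMap rank 0 (Pi.single (⟨b, hb0⟩ : {v : P // rank v = 0}) 1)) ⟨b, hb0⟩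
        = ((Finset.univ.filter
            (fun y : {v : P // rank v = 0 + 1} => (b : P) ⋖ (y : P) ∧ (b : P) ⋖ (y : P))).card : ℚ) :=
      DU_single rank 0 ⟨b, hb0⟩ ⟨b, hb0⟩
    simp only [LinearMap.coe_comp, Function.comp_apply, LinearMap.smul_apply,
      LinearMap.id_apply, Pi.smul_apply, smul_eq_mul, Pi.single_eq_same, mul_one] at h
    rw [hL] at h
    have hfu : (Finset.univ.filter
        (fun y : {v : P // rank v = 0 + 1} => (b : P) ⋖ (y : P) ∧ (b : P) ⋖ (y : P)))
        = Finset.univ := by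
      refine Finset.filter_true_of_mem fun y _ => ?_
      have := hbcov y y.2
      exact ⟨this, this⟩
    rw [hfu] at h
    have : (Fintype.card {v : P // rank v = 0 + 1} : ℚ) = r := by
      rw [← h]; simp [Finset.card_univ]
    exact_mod_cast this
  set x1 : {v : P // rank v = 1} := ⟨x, hx⟩ with hx1def
  have hx1coe : (x1 : P) = x := rfl
  -- the key count: common covers of x and x'
  have hN : ∀ x' : {v : P // rank v = 1},
      (Finset.univ.filter (fun y : {v : P // rank v = 1 + 1} =>
        (x1 : P) ⋖ (y : P) ∧ (x' : P) ⋖ (y : P))).card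
      = if x' = x1 then r + 1 else 1 := by
    intro x'
    have h := congrFun (LinearMap.congr_fun (hP.diff 0) (Pi.single x1 1)) x'
    have h' : downMap rank (1 + 1) (upMap rank 1 (Pi.single x1 1)) x'
        - upMap rank 0 (downMap rank (0 + 1) (Pi.single x1 1)) x'
        = (r : ℚ) • ((Pi.single x1 1 : {v : P // rank v = 1} → ℚ) x') := h
    rw [DU_single rank 1 x1 x', UD_single rank 0 x1 x'] at h'
    have hUD : (Finset.univ.filter
        (fun z : {v : P // rank v = 0} => (z : P) ⋖ (x1 : P) ∧ (z : P) ⋖ (x' : P))).card = 1 := by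
      have hfu : (Finset.univ.filter
          (fun z : {v : P // rank v = 0} => (z : P) ⋖ (x1 : P) ∧ (z : P) ⋖ (x' : P)))
          = Finset.univ := by
        refine Finset.filter_true_of_mem fun z _ => ?_
        have hzb : (z : P) = b := hb_uniq z z.2
        rw [hzb]
        exact ⟨hbcov x1 x1.2, hbcov x' x'.2⟩
      rw [hfu, Finset.card_univ, Fintype.card_unique]
    rw [hUD] at h'
    by_cases hc : x' = x1
    · subst hc
      rw [if_pos rfl]
      have : (((Finset.univ.filter (fun y : {v : P // rank v = 1 + 1} =>
          (x1 : P) ⋖ (y : P) ∧ (x1 : P) ⋖ (y : P))).card : ℚ)) = r + 1 := by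
        rw [Pi.single_eq_same, smul_eq_mul, mul_one] at h'
        push_cast at h' ⊢
        linarith
      exact_mod_cast this
    · rw [if_neg hc]
      have : (((Finset.univ.filter (fun y : {v : P // rank v = 1 + 1} =>
          (x1 : P) ⋖ (y : P) ∧ (x' : P) ⋖ (y : P))).card : ℚ)) = 1 := by
        rw [Pi.single_eq_of_ne hc, smul_zero] at h'
        push_cast at h' ⊢
        linarith
      exact_mod_cast this
  -- the set of covers of x and the down-degree function
  set A : Finset {v : P // rank v = 1 + 1} :=
    Finset.univ.filter (fun y => (x1 : P) ⋖ (y : P)) with hAdef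
  set d : {v : P // rank v = 1 + 1} → ℕ :=
    fun y => (Finset.univ.filter (fun z : {v : P // rank v = 1} => (z : P) ⋖ (y : P))).card
    with hddef
  have hAcard : A.card = r + 1 := by
    have h := hN x1
    rw [if_pos rfl] at h
    rw [← h, hAdef]
    congr 1
    apply Finset.filter_congr
    intro y _
    exact ⟨fun h => ⟨h, h⟩, fun h => h.1⟩
  have hsumd : ∑ y ∈ A, d y = 2 * r := by
    have hswap : ∑ y ∈ A, d y = ∑ z : {v : P // rank v = 1},
        (Finset.univ.filter (fun y : {v : P // rank v = 1 + 1} =>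
          (x1 : P) ⋖ (y : P) ∧ (z : P) ⋖ (y : P))).card := by
      calc ∑ y ∈ A, d y
          = ∑ y ∈ A, ∑ z : {v : P // rank v = 1},
              (if (z : P) ⋖ (y : P) then 1 else 0) := by
            refine Finset.sum_congr rfl fun y _ => ?_
            rw [hddef]
            exact Finset.card_filter _ _
        _ = ∑ z : {v : P // rank v = 1}, ∑ y ∈ A,
              (if (z : P) ⋖ (y : P) then 1 else 0) := Finset.sum_comm
        _ = ∑ z : {v : P // rank v = 1}, (A.filter fun y : {v : P // rank v = 1 + 1} => (z : P) ⋖ (y : P)).card := by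
            exact Finset.sum_congr rfl fun z _ => (Finset.card_filter _ _).symm
        _ = _ := by
            refine Finset.sum_congr rfl fun z _ => ?_
            rw [hAdef, Finset.filter_filter]
    rw [hswap]
    have heach : ∀ z : {v : P // rank v = 1},
        (Finset.univ.filter (fun y : {v : P // rank v = 1 + 1} =>
          (x1 : P) ⋖ (y : P) ∧ (z : P) ⋖ (y : P))).card
        = (if z = x1 then r else 0) + 1 := by
      intro z
      rw [hN z]
      by_cases hc : z = x1 <;> simp [hc]
    rw [Finset.sum_congr rfl (fun z _ => heach z), Finset.sum_add_distrib,
      Finset.sum_ite_eq' Finset.univ x1 (fun _ => r), if_pos (Finset.mem_univ _),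
      Finset.sum_const, Finset.card_univ, hcard1]
    simp only [smul_eq_mul, mul_one]
    omega
  -- covers with down-degree 1
  set S : Finset {v : P // rank v = 1 + 1} := A.filter (fun y => d y = 1) with hSdef
  have hd1 : ∀ y ∈ A, 1 ≤ d y := by
    intro y hy
    rw [hAdef, Finset.mem_filter] at hy
    refine Finset.card_pos.mpr ⟨x1, ?_⟩
    rw [Finset.mem_filter]
    exact ⟨Finset.mem_univ _, hy.2⟩
  have hScard : 2 ≤ S.card := by
    have hle : ∀ y ∈ A, 2 ≤ d y + (if d y = 1 then 1 else 0) := by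
      intro y hy
      have := hd1 y hy
      by_cases hc : d y = 1
      · rw [hc, if_pos rfl]
      · rw [if_neg hc]
        omega
    have h2 : 2 * A.card ≤ ∑ y ∈ A, (d y + if d y = 1 then 1 else 0) := by
      calc 2 * A.card = ∑ _y ∈ A, 2 := by rw [Finset.sum_const]; ring
        _ ≤ _ := Finset.sum_le_sum hle
    rw [Finset.sum_add_distrib, hsumd, ← Finset.card_filter, ← hSdef, hAcard] at h2
    omega
  -- every element of S is a thread element
  have hthread : ∀ y ∈ S, rank (y : P) = 2 ∧ x ⋖ (y : P) ∧ IsThreadElem rank (y : P) := by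
    intro y hy
    rw [hSdef, Finset.mem_filter, hAdef, Finset.mem_filter] at hy
    obtain ⟨⟨-, hxy⟩, hdy⟩ := hy
    rw [hx1coe] at hxy
    have hry : rank (y : P) = 2 := y.2
    have huniq : ∀ z : P, z ⋖ (y : P) → z = x := by
      intro z hz
      have hrz : rank z = 1 := by
        have := hP.rank_covBy z y hz
        omega
      have hmemz : (⟨z, hrz⟩ : {v : P // rank v = 1}) ∈
          Finset.univ.filter (fun w : {v : P // rank v = 1} => (w : P) ⋖ (y : P)) := by
        rw [Finset.mem_filter]; exact ⟨Finset.mem_univ _, hz⟩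
      have hmemx : x1 ∈
          Finset.univ.filter (fun w : {v : P // rank v = 1} => (w : P) ⋖ (y : P)) := by
        rw [Finset.mem_filter]; exact ⟨Finset.mem_univ _, hxy⟩
      have := Finset.card_le_one.mp (le_of_eq hdy) _ hmemz _ hmemx
      exact congrArg Subtype.val this
    refine ⟨hry, hxy, ⟨Or.inr ⟨x, hxy, huniq⟩, x, hxy, hx_singleton⟩⟩
  -- conclude
  obtain ⟨y1, hy1, y2, hy2, hne⟩ := Finset.one_lt_card.mp (by omega : 1 < S.card)
  have hfin : {y : P | rank y = 2 ∧ x ⋖ y ∧ IsThreadElem rank y}.Finite :=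
    Set.Finite.subset (Set.finite_range (fun v : {v : P // rank v = 2} => (v : P)))
      (fun y hy => ⟨⟨y, hy.1⟩, rfl⟩)
  have h1 : (y1 : P) ∈ {y : P | rank y = 2 ∧ x ⋖ y ∧ IsThreadElem rank y} := hthread y1 hy1
  have h2 : (y2 : P) ∈ {y : P | rank y = 2 ∧ x ⋖ y ∧ IsThreadElem rank y} := hthread y2 hy2
  have hnev : (y1 : P) ≠ (y2 : P) := fun h => hne (Subtype.ext h)
  have := (Set.one_lt_ncard hfin).mpr ⟨y1, h1, y2, h2, hnev⟩
  omega
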